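/- arXiv:2106.02693 — 5 statements merged into one kernel-verified Lean document; each statement's English description precedes it below -/
import Mathlib

section
/- Let μ be a σ-finite measure on a measurable space Y, let q_a and q_b be probability densities with respect to μ, let n_a, n_b be positive integers, n = n_a + n_b, and set p°(y) = (n_a/n)·q_a(y) + (n_b/n)·q_b(y), with ratios over p° defined as 0 where p° = 0. Let P be a probability measure on Y with density p with respect to μ. Then ∫ [∏_{i=1}^{n_a} q_a(x_i)/p°(x_i)] · [∏_{i=n_a+1}^{n} q_b(x_i)/p°(x_i)] dP^{⊗n}(x_1,…,x_n) ≤ 1. -/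
open MeasureTheory ENNReal

lemma lintegral_pi_prod {Y : Type*} [MeasurableSpace Y] :
    ∀ (n : ℕ) (P : Measure Y), SigmaFinite P → ∀ (f : Fin n → Y → ℝ≥0∞), (∀ i, Measurable (f i)) →
    ∫⁻ x : Fin n → Y, ∏ i, f i (x i) ∂(Measure.pi fun _ : Fin n => P) = ∏ i, ∫⁻ y, f i y ∂P := by
  intro n
  induction n with
  | zero =>
    intro P _ f hf
    simp [Measure.pi_of_empty]
  | succ n ih =>
    intro P hP f hf
    have hmp := measurePreserving_piFinSuccAbove (fun _ : Fin (n + 1) => P) 0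
    have hmeas : Measurable fun x : Fin (n + 1) → Y => ∏ i, f i (x i) :=
      Finset.measurable_prod _ fun i _ => (hf i).comp (measurable_pi_apply i)
    rw [← (MeasurePreserving.symm _ hmp).lintegral_comp hmeas]
    have hkey : ∀ p : Y × (Fin n → Y),
        (∏ i, f i (((MeasurableEquiv.piFinSuccAbove (fun _ : Fin (n+1) => Y) 0).symm p) i)) =
          f 0 p.1 * ∏ j : Fin n, f j.succ (p.2 j) := by
      intro p
      rw [Fin.prod_univ_succ]
      simp [MeasurableEquiv.piFinSuccAbove, Fin.zero_succAbove]
    simp_rw [hkey]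
    rw [lintegral_prod_mul (f := f 0) (g := fun v : Fin n → Y => ∏ j : Fin n, f j.succ (v j))
      (hf 0).aemeasurable
      (Finset.measurable_prod _ fun j _ => (hf j.succ).comp (measurable_pi_apply j)).aemeasurable]
    rw [ih P hP (fun j => f j.succ) (fun j => hf j.succ), Fin.prod_univ_succ]

/-- Theorem 1, part 1, general density form. For probability densities
`qa, qb` w.r.t. a σ-finite measure `μ`, `p° = (n_a/n)·qa + (n_b/n)·qb` (ratios defined as `0`
where `p° = 0`), and `P` a probability measure with density `p` w.r.t. `μ`, the two-stream
statistic has `P^{⊗n}`-expectation at most `1`. -/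
theorem two_stream_evariable {Y : Type*} [MeasurableSpace Y]
    (μ : Measure Y) [SigmaFinite μ]
    (qa qb : Y → ℝ≥0∞) (hqa : Measurable qa) (hqb : Measurable qb)
    (hqa1 : ∫⁻ y, qa y ∂μ = 1) (hqb1 : ∫⁻ y, qb y ∂μ = 1)
    (na nb : ℕ) (hna : 0 < na) (hnb : 0 < nb)
    (p : Y → ℝ≥0∞) (hp : Measurable p) (hp1 : ∫⁻ y, p y ∂μ = 1)
    (P : Measure Y) [IsProbabilityMeasure P] (hP : P = μ.withDensity p)
    (p0 : Y → ℝ≥0∞)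
    (hp0 : p0 = fun y => (↑na / (↑na + ↑nb) : ℝ≥0∞) * qa y + (↑nb / (↑na + ↑nb) : ℝ≥0∞) * qb y)
    (ra rb : Y → ℝ≥0∞)
    (hra : ra = fun y => if p0 y = 0 then 0 else qa y / p0 y)
    (hrb : rb = fun y => if p0 y = 0 then 0 else qb y / p0 y) :
    ∫⁻ x : Fin (na + nb) → Y,
        ∏ i : Fin (na + nb), (if (i : ℕ) < na then ra (x i) else rb (x i))
        ∂(Measure.pi fun _ : Fin (na + nb) => P) ≤ 1 := by
  -- basic facts about the weights
  set N : ℕ := na + nb with hN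
  have hNpos : 0 < N := Nat.add_pos_left hna nb
  have hNne : ((N : ℝ≥0∞)) ≠ 0 := by exact_mod_cast Nat.cast_ne_zero.2 hNpos.ne'
  have hNtop : ((N : ℝ≥0∞)) ≠ ⊤ := natCast_ne_top N
  set w1 : ℝ≥0∞ := (na : ℝ≥0∞) / (N : ℝ≥0∞) with hw1
  set w2 : ℝ≥0∞ := (nb : ℝ≥0∞) / (N : ℝ≥0∞) with hw2
  have hcast : ((na : ℝ≥0∞) + (nb : ℝ≥0∞)) = (N : ℝ≥0∞) := by rw [hN]; push_cast; ring
  have hw1w2 : w1 + w2 = 1 := by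
    rw [hw1, hw2, ENNReal.div_add_div_same, hcast]
    exact ENNReal.div_self hNne hNtop
  -- measurability
  have hp0m : Measurable p0 := by
    rw [hp0]; exact ((measurable_const.mul hqa).add (measurable_const.mul hqb))
  have hram : Measurable ra := by
    rw [hra]
    exact Measurable.ite (hp0m (measurableSet_singleton 0)) measurable_const (hqa.div hp0m)
  have hrbm : Measurable rb := by
    rw [hrb]
    exact Measurable.ite (hp0m (measurableSet_singleton 0)) measurable_const (hqb.div hp0m)
  -- factor the integral
  set A : ℝ≥0∞ := ∫⁻ y, ra y ∂P with hA
  set B : ℝ≥0∞ := ∫⁻ y, rb y ∂P with hB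
  have hfac : ∫⁻ x : Fin N → Y,
      ∏ i : Fin N, (if (i : ℕ) < na then ra (x i) else rb (x i))
      ∂(Measure.pi fun _ : Fin N => P) = A ^ na * B ^ nb := by
    have hshape : (fun x : Fin N → Y => ∏ i : Fin N, if (i : ℕ) < na then ra (x i) else rb (x i))
        = fun x : Fin N → Y => ∏ i : Fin N, (if (i : ℕ) < na then ra else rb) (x i) := by
      funext x
      exact Finset.prod_congr rfl fun i _ => by split <;> rfl
    rw [show (∫⁻ x : Fin N → Y, ∏ i : Fin N, if (i : ℕ) < na then ra (x i) else rb (x i)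
          ∂(Measure.pi fun _ : Fin N => P))
        = ∫⁻ x : Fin N → Y, ∏ i : Fin N, (if (i : ℕ) < na then ra else rb) (x i)
          ∂(Measure.pi fun _ : Fin N => P) from by rw [hshape]]
    rw [lintegral_pi_prod N P inferInstance
      (fun i => if (i : ℕ) < na then ra else rb)
      (fun i => by split <;> assumption)]
    rw [hN, Fin.prod_univ_add (f := fun i : Fin (na + nb) =>
      ∫⁻ y, (if (i : ℕ) < na then ra else rb) y ∂P)]
    have h1 : ∀ i : Fin na,
        (if ((Fin.castAdd nb i : Fin (na + nb)) : ℕ) < na then ra else rb) = ra :=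
      fun i => if_pos i.2
    have h2 : ∀ i : Fin nb,
        (if ((Fin.natAdd na i : Fin (na + nb)) : ℕ) < na then ra else rb) = rb :=
      fun i => if_neg (by simp [Fin.natAdd])
    simp only [h1, h2]
    rw [Finset.prod_const, Finset.prod_const, Finset.card_univ, Finset.card_univ,
      Fintype.card_fin, Fintype.card_fin, ← hA, ← hB]
  rw [hfac]
  -- the weighted sum of the integrals is at most 1
  have hpoint : ∀ y, w1 * ra y + w2 * rb y ≤ 1 := by
    intro y
    by_cases h0 : p0 y = 0
    · rw [hra, hrb]; simp [h0]
    · rw [hra, hrb]; simp only [h0, if_false]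
      rw [ENNReal.div_eq_inv_mul, ENNReal.div_eq_inv_mul, ← mul_assoc, ← mul_assoc,
        mul_comm w1 (p0 y)⁻¹, mul_comm w2 (p0 y)⁻¹, mul_assoc, mul_assoc, ← mul_add]
      have : w1 * qa y + w2 * qb y = p0 y := by rw [hp0, hw1, hw2, hN]; push_cast; ring
      rw [this, ← ENNReal.div_eq_inv_mul]
      exact ENNReal.div_self_le_one
  have hsum : w1 * A + w2 * B ≤ 1 := by
    rw [hA, hB, ← lintegral_const_mul _ hram, ← lintegral_const_mul _ hrbm,
      ← lintegral_add_left (hram.const_mul w1)]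
    calc ∫⁻ y, w1 * ra y + w2 * rb y ∂P ≤ ∫⁻ _, 1 ∂P := lintegral_mono hpoint
      _ = 1 := by simp
  -- weights nonzero
  have hw1ne : w1 ≠ 0 := by
    rw [hw1]
    refine ENNReal.div_ne_zero.2 ⟨?_, hNtop⟩
    exact_mod_cast Nat.cast_ne_zero.2 hna.ne'
  have hw2ne : w2 ≠ 0 := by
    rw [hw2]
    refine ENNReal.div_ne_zero.2 ⟨?_, hNtop⟩
    exact_mod_cast Nat.cast_ne_zero.2 hnb.ne'
  -- finish by AM-GM
  by_cases hA0 : A = 0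
  · rw [hA0, zero_pow hna.ne', zero_mul]; exact zero_le_one
  by_cases hB0 : B = 0
  · rw [hB0, zero_pow hnb.ne', mul_zero]; exact zero_le_one
  have hAtop : A ≠ ⊤ := by
    intro h
    have : w1 * A ≤ 1 := le_trans (le_add_of_nonneg_right zero_le) hsum
    rw [h, ENNReal.mul_top hw1ne] at this
    exact (by simp : ¬ (⊤ : ℝ≥0∞) ≤ 1) this
  have hBtop : B ≠ ⊤ := by
    intro h
    have : w2 * B ≤ 1 := le_trans (le_add_of_nonneg_left zero_le) hsum
    rw [h, ENNReal.mul_top hw2ne] at this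
    exact (by simp : ¬ (⊤ : ℝ≥0∞) ≤ 1) this
  -- pass to NNReal
  set a : NNReal := A.toNNReal with ha
  set b : NNReal := B.toNNReal with hb
  have hAa : A = (a : ℝ≥0∞) := (ENNReal.coe_toNNReal hAtop).symm
  have hBb : B = (b : ℝ≥0∞) := (ENNReal.coe_toNNReal hBtop).symm
  set v1 : NNReal := (na : NNReal) / (N : NNReal) with hv1
  set v2 : NNReal := (nb : NNReal) / (N : NNReal) with hv2
  have hNne' : (N : NNReal) ≠ 0 := Nat.cast_ne_zero.2 hNpos.ne'
  have hv1e : w1 = (v1 : ℝ≥0∞) := by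
    rw [hw1, hv1, ENNReal.coe_div hNne', ENNReal.coe_natCast, ENNReal.coe_natCast]
  have hv2e : w2 = (v2 : ℝ≥0∞) := by
    rw [hw2, hv2, ENNReal.coe_div hNne', ENNReal.coe_natCast, ENNReal.coe_natCast]
  have hv12 : v1 + v2 = 1 := by
    have := hw1w2
    rw [hv1e, hv2e, ← ENNReal.coe_add] at this
    exact_mod_cast this
  have hsum' : v1 * a + v2 * b ≤ 1 := by
    have := hsum
    rw [hv1e, hv2e, hAa, hBb, ← ENNReal.coe_mul, ← ENNReal.coe_mul, ← ENNReal.coe_add] at this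
    exact_mod_cast this
  have hgm : a ^ (v1 : ℝ) * b ^ (v2 : ℝ) ≤ 1 :=
    le_trans (NNReal.geom_mean_le_arith_mean2_weighted v1 v2 a b hv12) hsum'
  have hfin : a ^ na * b ^ nb ≤ 1 := by
    have hpow : (a ^ (v1 : ℝ) * b ^ (v2 : ℝ)) ^ N ≤ 1 ^ N := pow_le_pow_left₀ zero_le hgm N
    rw [one_pow, mul_pow, ← NNReal.rpow_natCast (a ^ (v1 : ℝ)) N,
      ← NNReal.rpow_natCast (b ^ (v2 : ℝ)) N, ← NNReal.rpow_mul, ← NNReal.rpow_mul] at hpow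
    have e1 : (v1 : ℝ) * (N : ℝ) = (na : ℝ) := by
      rw [hv1]
      push_cast
      field_simp
    have e2 : (v2 : ℝ) * (N : ℝ) = (nb : ℝ) := by
      rw [hv2]
      push_cast
      field_simp
    rw [e1, e2, NNReal.rpow_natCast, NNReal.rpow_natCast] at hpow
    exact hpow
  rw [hAa, hBb, ← ENNReal.coe_pow, ← ENNReal.coe_pow, ← ENNReal.coe_mul]
  exact_mod_cast hfin
end

section
/- Let n_a, n_b be positive integers, n = n_a + n_b, and let θ*_a, θ*_b ∈ (0,1) with θ_0 = (n_a/n)·θ*_a + (n_b/n)·θ*_b. For the Bernoulli pmf p_η(y) = η^y (1−η)^{1−y} on {0,1}, and for every θ ∈ [0,1], the expectation under Y_1, …, Y_n drawn i.i.d. Bernoulli(θ) of the product ∏_{i=1}^{n_a} p_{θ*_a}(Y_i)/p_{θ_0}(Y_i) · ∏_{i=n_a+1}^{n} p_{θ*_b}(Y_i)/p_{θ_0}(Y_i) is at most 1. -/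
/-- equation (3.4) is an E-variable. For the Bernoulli pmf
`p_η(y) = η^y (1−η)^{1−y}` on `{0,1}`, `θ*_a, θ*_b ∈ (0,1)`,
`θ_0 = (n_a/n)·θ*_a + (n_b/n)·θ*_b`, and any `θ ∈ [0,1]`, the expectation, under `n` i.i.d.
Bernoulli(θ) outcomes, of the product of likelihood ratios is at most `1`. -/
theorem bernoulli_two_stream_evariable (na nb : ℕ) (hna : 0 < na) (hnb : 0 < nb)
    (θa θb : ℝ) (hθa : θa ∈ Set.Ioo (0 : ℝ) 1) (hθb : θb ∈ Set.Ioo (0 : ℝ) 1)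
    (θ : ℝ) (hθ : θ ∈ Set.Icc (0 : ℝ) 1)
    (p : ℝ → Fin 2 → ℝ) (hpdef : p = fun (η : ℝ) (y : Fin 2) => η ^ (y : ℕ) * (1 - η) ^ (1 - (y : ℕ)))
    (θ0 : ℝ)
    (hθ0 : θ0 = ((na : ℝ) / ((na : ℝ) + (nb : ℝ))) * θa
        + ((nb : ℝ) / ((na : ℝ) + (nb : ℝ))) * θb) :
    ∑ x : Fin (na + nb) → Fin 2,
        (∏ i : Fin (na + nb), p θ (x i)) *
          ∏ i : Fin (na + nb),
            (if (i : ℕ) < na then p θa (x i) / p θ0 (x i) else p θb (x i) / p θ0 (x i)) ≤ 1 := by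
  obtain ⟨hθa0, hθa1⟩ := hθa
  obtain ⟨hθb0, hθb1⟩ := hθb
  obtain ⟨hθl, hθr⟩ := hθ
  have hna' : (0:ℝ) < na := by exact_mod_cast hna
  have hnb' : (0:ℝ) < nb := by exact_mod_cast hnb
  have hn : (0:ℝ) < (na:ℝ) + nb := by linarith
  have hwa : (0:ℝ) < (na:ℝ)/((na:ℝ)+nb) := by positivity
  have hwb : (0:ℝ) < (nb:ℝ)/((na:ℝ)+nb) := by positivity
  have hw1 : (na:ℝ)/((na:ℝ)+nb) + (nb:ℝ)/((na:ℝ)+nb) = 1 := by field_simp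
  have hθ0pos : 0 < θ0 := by rw [hθ0]; positivity
  have hθ0lt : θ0 < 1 := by
    have h1 := mul_lt_mul_of_pos_left hθa1 hwa
    have h2 := mul_lt_mul_of_pos_left hθb1 hwb
    rw [hθ0]; nlinarith
  have hθ0ne : θ0 ≠ 0 := ne_of_gt hθ0pos
  have hθ0ne' : (1:ℝ) - θ0 ≠ 0 := by linarith
  set Ea : ℝ := θ * θa / θ0 + (1 - θ) * (1 - θa) / (1 - θ0) with hEa
  set Eb : ℝ := θ * θb / θ0 + (1 - θ) * (1 - θb) / (1 - θ0) with hEb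
  have hEa0 : 0 ≤ Ea := by
    apply add_nonneg
    · exact div_nonneg (mul_nonneg hθl (le_of_lt hθa0)) (le_of_lt hθ0pos)
    · exact div_nonneg (mul_nonneg (by linarith) (by linarith)) (by linarith)
  have hEb0 : 0 ≤ Eb := by
    apply add_nonneg
    · exact div_nonneg (mul_nonneg hθl (le_of_lt hθb0)) (le_of_lt hθ0pos)
    · exact div_nonneg (mul_nonneg (by linarith) (by linarith)) (by linarith)
  have hmix : (na:ℝ) * θa + nb * θb = ((na:ℝ) + nb) * θ0 := by
    rw [hθ0]; field_simp
  have hid : (na:ℝ) * Ea + nb * Eb = (na:ℝ) + nb := by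
    rw [hEa, hEb]
    field_simp
    linear_combination (θ*(1-θ0) - (1-θ)*θ0) * hmix
  -- the integrand as a product over coordinates
  set F : Fin (na + nb) → Fin 2 → ℝ := fun i y =>
    p θ y * (if (i : ℕ) < na then p θa y / p θ0 y else p θb y / p θ0 y) with hF
  have hstep1 : ∀ x : Fin (na + nb) → Fin 2,
      (∏ i : Fin (na + nb), p θ (x i)) *
        ∏ i : Fin (na + nb),
          (if (i : ℕ) < na then p θa (x i) / p θ0 (x i) else p θb (x i) / p θ0 (x i))
      = ∏ i : Fin (na + nb), F i (x i) := by
    intro x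
    rw [hF, ← Finset.prod_mul_distrib]
  rw [Finset.sum_congr rfl (fun x _ => hstep1 x)]
  -- factorize the expectation
  have hfact := Finset.prod_univ_sum (fun _ : Fin (na + nb) => (Finset.univ : Finset (Fin 2))) F
  rw [Fintype.piFinset_univ] at hfact
  rw [← hfact]
  -- compute each factor
  have hsum : ∀ i : Fin (na + nb),
      (∑ y : Fin 2, F i y) = if (i : ℕ) < na then Ea else Eb := by
    intro i
    rw [Fin.sum_univ_two, hF, hpdef]
    by_cases h : (i : ℕ) < na <;> simp [h, hEa, hEb] <;> ring
  rw [Finset.prod_congr rfl (fun i _ => hsum i), Fin.prod_univ_add]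
  have h1 : ∀ i : Fin na, (if ((Fin.castAdd nb i : Fin (na+nb)) : ℕ) < na then Ea else Eb) = Ea := by
    intro i; simp [i.isLt]
  have h2 : ∀ i : Fin nb, (if ((Fin.natAdd na i : Fin (na+nb)) : ℕ) < na then Ea else Eb) = Eb := by
    intro i; simp
  rw [Finset.prod_congr rfl (fun i _ => h1 i), Finset.prod_congr rfl (fun i _ => h2 i),
    Finset.prod_const, Finset.prod_const, Finset.card_univ, Finset.card_univ,
    Fintype.card_fin, Fintype.card_fin]
  -- AM-GM
  have hAM : Ea ^ ((na:ℝ)/((na:ℝ)+nb)) * Eb ^ ((nb:ℝ)/((na:ℝ)+nb)) ≤ 1 := by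
    have hg := Real.geom_mean_le_arith_mean2_weighted (le_of_lt hwa) (le_of_lt hwb) hEa0 hEb0 hw1
    have heq : (na:ℝ)/((na:ℝ)+nb) * Ea + (nb:ℝ)/((na:ℝ)+nb) * Eb = 1 := by
      field_simp
      linarith [hid]
    linarith
  have hpow : Ea ^ na * Eb ^ nb
      = (Ea ^ ((na:ℝ)/((na:ℝ)+nb)) * Eb ^ ((nb:ℝ)/((na:ℝ)+nb))) ^ (na + nb) := by
    rw [mul_pow, ← Real.rpow_natCast (Ea ^ ((na:ℝ)/((na:ℝ)+nb))) (na+nb),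
      ← Real.rpow_natCast (Eb ^ ((nb:ℝ)/((na:ℝ)+nb))) (na+nb),
      ← Real.rpow_mul hEa0, ← Real.rpow_mul hEb0]
    have e1 : (na:ℝ)/((na:ℝ)+nb) * ((na + nb : ℕ) : ℝ) = (na:ℝ) := by
      push_cast; field_simp
    have e2 : (nb:ℝ)/((na:ℝ)+nb) * ((na + nb : ℕ) : ℝ) = (nb:ℝ) := by
      push_cast; field_simp
    rw [e1, e2, Real.rpow_natCast, Real.rpow_natCast]
  rw [hpow]
  exact pow_le_one₀ (by positivity) hAM
end

section
/- Let W be a Borel probability measure on [0,1]^2 with coordinate marginals W_a and W_b, and set m_a = ∫ θ_a dW_a(θ_a) and m_b = ∫ θ_b dW_b(θ_b). Let n_a, n_b be positive integers, n = n_a + n_b, and assume (n_a/n)m_a + (n_b/n)m_b ∈ (0,1). Then for all y_a ∈ {0,1}^{n_a} and y_b ∈ {0,1}^{n_b}, the mixture E-variable satisfies s(y_a, y_b; n_a, n_b, W) = s(y_a, y_b; n_a, n_b, m_a, m_b), where s(y_a, y_b; n_a, n_b, W) = [∏_{i=1}^{n_a} p_{W_a}(y_{i,a}) / ((n_a/n)p_{W_a}(y_{i,a})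 + (n_b/n)p_{W_b}(y_{i,a}))] · [∏_{i=1}^{n_b} p_{W_b}(y_{i,b}) / ((n_a/n)p_{W_a}(y_{i,b}) + (n_b/n)p_{W_b}(y_{i,b}))] with p_{W_g}(y) = ∫ θ^y(1−θ)^{1−y} dW_g(θ), and s(y_a, y_b; n_a, n_b, θ*_a, θ*_b) = ∏_{i=1}^{n_a} p_{θ*_a}(y_{i,a})/p_{θ_0}(y_{i,a}) · ∏_{i=1}^{n_b} p_{θ*_b}(y_{i,b})/p_{θ_0}(y_{i,b}) with θ_0 = (n_a/n)θ*_a + (n_b/n)θ*_b and p_η(y) = η^y(1−η)^{1−y}. -/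
open MeasureTheory

/-- equation (3.6): the mixture E-variable equals the prior-mean
E-variable. For a prior `W` on `[0,1]²` with marginals `W_a, W_b` and means `m_a, m_b`,
the Bernoulli-mixture predictive pmfs `p_{W_g}` coincide in the two-stream statistic with
the Bernoulli pmfs at the prior means: `s(y_a, y_b; n_a, n_b, W) = s(y_a, y_b; n_a, n_b, m_a, m_b)`. -/
theorem mixture_evariable_eq_mean_evariable
    (W : Measure (ℝ × ℝ)) [IsProbabilityMeasure W]
    (hsupp : ∀ᵐ θ ∂W, θ.1 ∈ Set.Icc (0 : ℝ) 1 ∧ θ.2 ∈ Set.Icc (0 : ℝ) 1)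
    (Wa Wb : Measure ℝ) (hWa : Wa = W.map Prod.fst) (hWb : Wb = W.map Prod.snd)
    (ma mb : ℝ) (hma : ma = ∫ θ, θ ∂Wa) (hmb : mb = ∫ θ, θ ∂Wb)
    (na nb : ℕ) (hna : 0 < na) (hnb : 0 < nb)
    (pBer : ℝ → Fin 2 → ℝ)
    (hpBer : pBer = fun (η : ℝ) (y : Fin 2) => η ^ (y : ℕ) * (1 - η) ^ (1 - (y : ℕ)))
    (pWa pWb : Fin 2 → ℝ)
    (hpWa : pWa = fun y => ∫ θ, pBer θ y ∂Wa) (hpWb : pWb = fun y => ∫ θ, pBer θ y ∂Wb)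
    (θ0 : ℝ)
    (hθ0 : θ0 = ((na : ℝ) / ((na : ℝ) + (nb : ℝ))) * ma
        + ((nb : ℝ) / ((na : ℝ) + (nb : ℝ))) * mb)
    (hθ0mem : θ0 ∈ Set.Ioo (0 : ℝ) 1)
    (ya : Fin na → Fin 2) (yb : Fin nb → Fin 2) :
    (∏ i : Fin na, pWa (ya i) /
        (((na : ℝ) / ((na : ℝ) + (nb : ℝ))) * pWa (ya i)
          + ((nb : ℝ) / ((na : ℝ) + (nb : ℝ))) * pWb (ya i))) *
      (∏ i : Fin nb, pWb (yb i) /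
        (((na : ℝ) / ((na : ℝ) + (nb : ℝ))) * pWa (yb i)
          + ((nb : ℝ) / ((na : ℝ) + (nb : ℝ))) * pWb (yb i)))
      = (∏ i : Fin na, pBer ma (ya i) / pBer θ0 (ya i)) *
          (∏ i : Fin nb, pBer mb (yb i) / pBer θ0 (yb i)) := by
  have hn : (0:ℝ) < (na:ℝ) + (nb:ℝ) := by positivity
  have hsum : (na : ℝ) / ((na : ℝ) + (nb : ℝ)) + (nb : ℝ) / ((na : ℝ) + (nb : ℝ)) = 1 := by
    field_simp
  -- marginals are probability measures
  have hWaP : IsProbabilityMeasure Wa := hWa ▸ Measure.isProbabilityMeasure_map measurable_fst.aemeasurable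
  have hWbP : IsProbabilityMeasure Wb := hWb ▸ Measure.isProbabilityMeasure_map measurable_snd.aemeasurable
  -- a.e. bounds
  have haea : ∀ᵐ θ ∂Wa, θ ∈ Set.Icc (0:ℝ) 1 := by
    rw [hWa]
    exact (ae_map_iff measurable_fst.aemeasurable measurableSet_Icc).mpr
      (hsupp.mono fun p hp => hp.1)
  have haeb : ∀ᵐ θ ∂Wb, θ ∈ Set.Icc (0:ℝ) 1 := by
    rw [hWb]
    exact (ae_map_iff measurable_snd.aemeasurable measurableSet_Icc).mpr
      (hsupp.mono fun p hp => hp.2)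
  have hinta : Integrable (fun θ : ℝ => θ) Wa := by
    apply Integrable.mono' (integrable_const 1) measurable_id.aestronglyMeasurable
    filter_upwards [haea] with θ hθ
    simp only [Set.mem_Icc] at hθ
    rw [Real.norm_eq_abs, abs_le]
    exact ⟨by simpa using le_trans (by norm_num) hθ.1, hθ.2⟩
  have hintb : Integrable (fun θ : ℝ => θ) Wb := by
    apply Integrable.mono' (integrable_const 1) measurable_id.aestronglyMeasurable
    filter_upwards [haeb] with θ hθ
    simp only [Set.mem_Icc] at hθ
    rw [Real.norm_eq_abs, abs_le]
    exact ⟨by simpa using le_trans (by norm_num) hθ.1, hθ.2⟩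
  -- mixture pmfs equal Bernoulli pmfs at the means
  have hpa : ∀ y, pWa y = pBer ma y := by
    intro y
    fin_cases y
    · simp only [hpWa, hpBer, Fin.isValue]
      norm_num
      rw [integral_sub (integrable_const 1) hinta, integral_const]
      simp [hma]
    · simp only [hpWa, hpBer, Fin.isValue]
      norm_num
      exact hma.symm
  have hpb : ∀ y, pWb y = pBer mb y := by
    intro y
    fin_cases y
    · simp only [hpWb, hpBer, Fin.isValue]
      norm_num
      rw [integral_sub (integrable_const 1) hintb, integral_const]
      simp [hmb]
    · simp only [hpWb, hpBer, Fin.isValue]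
      norm_num
      exact hmb.symm
  -- denominator equals Bernoulli pmf at θ0
  have hden : ∀ y : Fin 2,
      ((na : ℝ) / ((na : ℝ) + (nb : ℝ))) * pBer ma y
        + ((nb : ℝ) / ((na : ℝ) + (nb : ℝ))) * pBer mb y = pBer θ0 y := by
    intro y
    fin_cases y
    · simp only [hpBer, Fin.isValue]
      norm_num
      rw [hθ0]
      nlinarith [hsum]
    · simp only [hpBer, Fin.isValue]
      norm_num
      exact hθ0.symm
  congr 1
  · exact Finset.prod_congr rfl fun i _ => by rw [hpa, hpb, hden]
  · exact Finset.prod_congr rfl fun i _ => by rw [hpa, hpb, hden]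
end

section
/- Fix positive integers n_a, n_b with n = n_a + n_b and a positive integer m. Let each block Y_(j), j = 1,…,m, consist of n_a i.i.d. Bernoulli(θ) outcomes in group a and n_b i.i.d. Bernoulli(θ) outcomes in group b, all outcomes across all blocks mutually independent, for an arbitrary θ ∈ [0,1]. For each j, let θ̂_{a,j} and θ̂_{b,j} be (0,1)-valued measurable functions of the first j−1 blocks Y^{(j−1)}. Then the product S^{(m)} = ∏_{j=1}^m s(Y_(j); n_a, n_b, θ̂_{a,j}(Y^{(j−1)}), θ̂_{b,j}(Y^{(j−1)})) satisfies E_θ[S^{(m)}] ≤ 1 for every θ ∈ [0,1], where s(y_a, y_b; n_a, n_b, θ*_a, θ*_b) = ∏_{i=1}^{n_a} p_{θ*_a}(y_{i,a})/p_{θ_0}(y_{i,a}) · ∏_{i=1}^{n_b} p_{θ*_b}(y_{i,b})/p_{θ_0}(y_{i,b}) with θ_0 = (n_a/n)θ*_a + (n_b/n)θ*_b and Bernoulli pmf p_η(y) = η^y(1−η)^{1−y}. -/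
open Finset

/-- Bernoulli pmf on `Fin 2`. -/
noncomputable def bp (η : ℝ) (y : Fin 2) : ℝ := η ^ (y : ℕ) * (1 - η) ^ (1 - (y : ℕ))

@[simp] lemma bp0 (η : ℝ) : bp η 0 = 1 - η := by simp [bp]
@[simp] lemma bp1 (η : ℝ) : bp η 1 = η := by simp [bp]

lemma bp_nonneg {η : ℝ} (h : η ∈ Set.Icc (0:ℝ) 1) (v : Fin 2) : 0 ≤ bp η v := by
  fin_cases v <;> simp <;> linarith [h.1, h.2]

lemma bp_sum (η : ℝ) : ∑ v : Fin 2, bp η v = 1 := by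
  rw [Fin.sum_univ_two]; simp

/-- Weighted AM-GM specialised to two factors with natural exponents. -/
lemma amgm_pow_le_one {a b : ℝ} (ha : 0 ≤ a) (hb : 0 ≤ b) {na nb : ℕ}
    (hna : 0 < na) (hnb : 0 < nb)
    (hsum : (na : ℝ) * a + (nb : ℝ) * b ≤ (na : ℝ) + nb) :
    a ^ na * b ^ nb ≤ 1 := by
  set n : ℝ := (na : ℝ) + (nb : ℝ) with hn
  have hnpos : 0 < n := by positivity
  have hw : (na : ℝ)/n + (nb : ℝ)/n = 1 := by field_simp; exact hn.symm
  have hx : a ^ ((na:ℝ)/n) * b ^ ((nb:ℝ)/n) ≤ (na:ℝ)/n * a + (nb:ℝ)/n * b :=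
    Real.geom_mean_le_arith_mean2_weighted (by positivity) (by positivity) ha hb hw
  have hx1 : a ^ ((na:ℝ)/n) * b ^ ((nb:ℝ)/n) ≤ 1 := by
    refine hx.trans ?_
    rw [div_mul_eq_mul_div, div_mul_eq_mul_div, ← add_div, div_le_one hnpos]
    exact hsum
  have hxnn : (0:ℝ) ≤ a ^ ((na:ℝ)/n) * b ^ ((nb:ℝ)/n) := by positivity
  have hcast : ((na + nb : ℕ) : ℝ) = n := by push_cast [hn]; ring
  have e1 : ((na:ℝ)/n) * ((na + nb : ℕ):ℝ) = (na:ℝ) := by rw [hcast]; field_simp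
  have e2 : ((nb:ℝ)/n) * ((na + nb : ℕ):ℝ) = (nb:ℝ) := by rw [hcast]; field_simp
  calc a ^ na * b ^ nb
      = (a ^ ((na:ℝ)/n) * b ^ ((nb:ℝ)/n)) ^ (na + nb) := by
        rw [mul_pow, ← Real.rpow_natCast (a ^ ((na:ℝ)/n)) (na+nb),
          ← Real.rpow_natCast (b ^ ((nb:ℝ)/n)) (na+nb),
          ← Real.rpow_mul ha, ← Real.rpow_mul hb, e1, e2,
          Real.rpow_natCast, Real.rpow_natCast]
    _ ≤ 1 ^ (na + nb) := pow_le_pow_left₀ hxnn hx1 _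
    _ = 1 := one_pow _

lemma fun_sum_split {na nb : ℕ} (f g : Fin 2 → ℝ) :
    ∑ y : (Fin na → Fin 2) × (Fin nb → Fin 2),
      (∏ i, f (y.1 i)) * (∏ i, g (y.2 i)) = (∑ v, f v) ^ na * (∑ v, g v) ^ nb := by
  rw [Fintype.sum_pow, Fintype.sum_pow, Finset.sum_mul_sum, Fintype.sum_prod_type]

lemma theta0_mem {na nb : ℕ} (hna : 0 < na) (hnb : 0 < nb) {θa θb : ℝ}
    (hθa : θa ∈ Set.Ioo (0:ℝ) 1) (hθb : θb ∈ Set.Ioo (0:ℝ) 1) :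
    ((na:ℝ)/((na:ℝ)+(nb:ℝ)))*θa + ((nb:ℝ)/((na:ℝ)+(nb:ℝ)))*θb ∈ Set.Ioo (0:ℝ) 1 := by
  have hN : (0:ℝ) < (na:ℝ) + (nb:ℝ) := by positivity
  have hda : (0:ℝ) < (na:ℝ)/((na:ℝ)+(nb:ℝ)) := by positivity
  have hdb : (0:ℝ) < (nb:ℝ)/((na:ℝ)+(nb:ℝ)) := by positivity
  constructor
  · exact add_pos (mul_pos hda hθa.1) (mul_pos hdb hθb.1)
  · have hsum : (na:ℝ)/((na:ℝ)+(nb:ℝ)) + (nb:ℝ)/((na:ℝ)+(nb:ℝ)) = 1 := by field_simp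
    calc ((na:ℝ)/((na:ℝ)+(nb:ℝ)))*θa + ((nb:ℝ)/((na:ℝ)+(nb:ℝ)))*θb
        < ((na:ℝ)/((na:ℝ)+(nb:ℝ)))*1 + ((nb:ℝ)/((na:ℝ)+(nb:ℝ)))*1 :=
          add_lt_add (by nlinarith [hθa.2]) (by nlinarith [hθb.2])
      _ = 1 := by rw [mul_one, mul_one]; exact hsum

/-- Single-block E-variable bound: the expectation of the simple two-stream
E-variable under any null `θ ∈ [0,1]` is at most `1`. -/
lemma block_le_one {na nb : ℕ} (hna : 0 < na) (hnb : 0 < nb) {θ θa θb : ℝ}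
    (hθ : θ ∈ Set.Icc (0:ℝ) 1) (hθa : θa ∈ Set.Ioo (0:ℝ) 1) (hθb : θb ∈ Set.Ioo (0:ℝ) 1) :
    ∑ y : (Fin na → Fin 2) × (Fin nb → Fin 2),
      ((∏ i, bp θ (y.1 i)) * ∏ i, bp θ (y.2 i)) *
      ((∏ i, bp θa (y.1 i) /
          bp (((na:ℝ)/((na:ℝ)+(nb:ℝ)))*θa + ((nb:ℝ)/((na:ℝ)+(nb:ℝ)))*θb) (y.1 i)) *
       (∏ i, bp θb (y.2 i) /
          bp (((na:ℝ)/((na:ℝ)+(nb:ℝ)))*θa + ((nb:ℝ)/((na:ℝ)+(nb:ℝ)))*θb) (y.2 i))) ≤ 1 := by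
  have hN : (0:ℝ) < (na:ℝ) + (nb:ℝ) := by positivity
  set θ0 : ℝ := ((na:ℝ)/((na:ℝ)+(nb:ℝ)))*θa + ((nb:ℝ)/((na:ℝ)+(nb:ℝ)))*θb with hθ0
  have h0 : 0 < θ0 := (theta0_mem hna hnb hθa hθb).1
  have h1 : θ0 < 1 := (theta0_mem hna hnb hθa hθb).2
  have step1 : ∑ y : (Fin na → Fin 2) × (Fin nb → Fin 2),
      ((∏ i, bp θ (y.1 i)) * ∏ i, bp θ (y.2 i)) *
      ((∏ i, bp θa (y.1 i) / bp θ0 (y.1 i)) * (∏ i, bp θb (y.2 i) / bp θ0 (y.2 i)))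
      = (∑ v, bp θ v * (bp θa v / bp θ0 v)) ^ na * (∑ v, bp θ v * (bp θb v / bp θ0 v)) ^ nb := by
    rw [← fun_sum_split]
    refine Finset.sum_congr rfl fun y _ => ?_
    rw [Finset.prod_mul_distrib, Finset.prod_mul_distrib]; ring
  rw [step1]
  have hA : ∑ v : Fin 2, bp θ v * (bp θa v / bp θ0 v)
      = (1-θ) * ((1-θa)/(1-θ0)) + θ * (θa/θ0) := by
    rw [Fin.sum_univ_two]; simp
  have hB : ∑ v : Fin 2, bp θ v * (bp θb v / bp θ0 v)
      = (1-θ) * ((1-θb)/(1-θ0)) + θ * (θb/θ0) := by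
    rw [Fin.sum_univ_two]; simp
  rw [hA, hB]
  have h1' : (0:ℝ) < 1 - θ0 := by linarith
  have hAnn : (0:ℝ) ≤ (1-θ) * ((1-θa)/(1-θ0)) + θ * (θa/θ0) := by
    have h2 : (0:ℝ) ≤ (1-θ) * ((1-θa)/(1-θ0)) :=
      mul_nonneg (by linarith [hθ.2]) (div_nonneg (by linarith [hθa.2]) h1'.le)
    have h3 : (0:ℝ) ≤ θ * (θa/θ0) :=
      mul_nonneg hθ.1 (div_nonneg hθa.1.le h0.le)
    linarith
  have hBnn : (0:ℝ) ≤ (1-θ) * ((1-θb)/(1-θ0)) + θ * (θb/θ0) := by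
    have h2 : (0:ℝ) ≤ (1-θ) * ((1-θb)/(1-θ0)) :=
      mul_nonneg (by linarith [hθ.2]) (div_nonneg (by linarith [hθb.2]) h1'.le)
    have h3 : (0:ℝ) ≤ θ * (θb/θ0) :=
      mul_nonneg hθ.1 (div_nonneg hθb.1.le h0.le)
    linarith
  refine amgm_pow_le_one hAnn hBnn hna hnb (le_of_eq ?_)
  have hnapos : (0:ℝ) < na := by exact_mod_cast hna
  have hnbpos : (0:ℝ) < nb := by exact_mod_cast hnb
  have hD1 : (0:ℝ) < (na:ℝ)*θa + (nb:ℝ)*θb :=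
    add_pos (mul_pos hnapos hθa.1) (mul_pos hnbpos hθb.1)
  have hθ0e : θ0 = ((na:ℝ)*θa + (nb:ℝ)*θb) / ((na:ℝ)+(nb:ℝ)) := by
    rw [hθ0]; field_simp
  have hD2' : (0:ℝ) < (na:ℝ) + (nb:ℝ) - ((na:ℝ)*θa + (nb:ℝ)*θb) := by nlinarith [hθa.2, hθb.2]
  rw [hθ0e]
  field_simp
  ring

lemma restrict_snoc {B : Type*} {m : ℕ} (x' : Fin m → B) (y : B) (j : Fin m) :
    (fun i : Fin ((Fin.castSucc j : Fin (m+1)) : ℕ) =>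
        (Fin.snoc x' y : Fin (m+1) → B) (Fin.castLE (le_of_lt (Fin.castSucc j).isLt) i)) =
      (fun i => x' (Fin.castLE (le_of_lt j.isLt) i)) :=
  funext fun i => by
    rw [show Fin.castLE (le_of_lt (Fin.castSucc j).isLt) i
        = Fin.castSucc (Fin.castLE (le_of_lt j.isLt) i) from rfl, Fin.snoc_castSucc]

lemma restrict_snoc_last {B : Type*} {m : ℕ} (x' : Fin m → B) (y : B) :
    (fun i : Fin ((Fin.last m : Fin (m+1)) : ℕ) =>
        (Fin.snoc x' y : Fin (m+1) → B) (Fin.castLE (le_of_lt (Fin.last m).isLt) i)) = x' :=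
  funext fun i => by
    rw [show Fin.castLE (le_of_lt (Fin.last m).isLt) i = Fin.castSucc i from rfl,
      Fin.snoc_castSucc]

/-- Safety of a predictably updated product of E-variables, by induction on the
number of blocks. -/
lemma pred_prod_le_one {B : Type*} [Fintype B] (w : B → ℝ) (hw0 : ∀ y, 0 ≤ w y) :
    ∀ (m : ℕ) (g : (j : Fin m) → (Fin (j : ℕ) → B) → B → ℝ),
      (∀ j h y, 0 ≤ g j h y) → (∀ j h, ∑ y, w y * g j h y ≤ 1) →
      ∑ x : Fin m → B,
        (∏ j, w (x j)) * ∏ j, g j (fun i => x (Fin.castLE (le_of_lt j.isLt) i)) (x j) ≤ 1 := by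
  intro m
  induction m with
  | zero =>
    intro g _ _
    simp
  | succ m ih =>
    intro g hg0 hg1
    have key := ih (fun j => g j.castSucc) (fun j h y => hg0 j.castSucc h y)
      (fun j h => hg1 j.castSucc h)
    rw [← Equiv.sum_comp (Fin.snocEquiv (fun _ => B)), Fintype.sum_prod_type]
    simp only [Fin.snocEquiv_apply]
    simp only [Fin.prod_univ_castSucc, Fin.snoc_castSucc, Fin.snoc_last,
      restrict_snoc, restrict_snoc_last]
    rw [Finset.sum_comm]
    refine le_trans (Finset.sum_le_sum (fun x' _ => ?_)) key
    have hnn : (0:ℝ) ≤ (∏ j : Fin m, w (x' j)) *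
        ∏ j : Fin m, g j.castSucc (fun i => x' (Fin.castLE (le_of_lt j.isLt) i)) (x' j) :=
      mul_nonneg (Finset.prod_nonneg fun j _ => hw0 _)
        (Finset.prod_nonneg fun j _ => hg0 _ _ _)
    calc ∑ y : B, ((∏ j : Fin m, w (x' j)) * w y) *
          ((∏ j : Fin m, g j.castSucc (fun i => x' (Fin.castLE (le_of_lt j.isLt) i)) (x' j)) *
            g (Fin.last m) x' y)
        = ((∏ j : Fin m, w (x' j)) *
            ∏ j : Fin m, g j.castSucc (fun i => x' (Fin.castLE (le_of_lt j.isLt) i)) (x' j)) *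
          ∑ y : B, w y * g (Fin.last m) x' y := by
          rw [Finset.mul_sum]; exact Finset.sum_congr rfl fun y _ => by ring
      _ ≤ ((∏ j : Fin m, w (x' j)) *
            ∏ j : Fin m, g j.castSucc (fun i => x' (Fin.castLE (le_of_lt j.isLt) i)) (x' j)) * 1 :=
          mul_le_mul_of_nonneg_left (hg1 _ _) hnn
      _ = _ := mul_one _

/-- safety of the sequentially updated E-value product, equations (2.4)
and (2.6). Blocks of `n_a + n_b` i.i.d. Bernoulli(θ) outcomes under the null; the
alternative parameters used in block `j` are arbitrary `(0,1)`-valued (predictable)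
functions of the previous `j − 1` blocks. Then the running product `S^{(m)}` of the simple
E-variables `s(·; n_a, n_b, θ̂_{a,j}, θ̂_{b,j})` has expectation at most `1` under every
null parameter `θ ∈ [0,1]`. -/
theorem sequential_product_evariable_le_one (na nb m : ℕ)
    (hna : 0 < na) (hnb : 0 < nb) (hm : 0 < m)
    (θ : ℝ) (hθ : θ ∈ Set.Icc (0 : ℝ) 1)
    (p : ℝ → Fin 2 → ℝ)
    (hp : p = fun (η : ℝ) (y : Fin 2) => η ^ (y : ℕ) * (1 - η) ^ (1 - (y : ℕ)))
    (s : ((Fin na → Fin 2) × (Fin nb → Fin 2)) → ℝ → ℝ → ℝ)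
    (hs : s = fun y θa θb =>
      (∏ i : Fin na, p θa (y.1 i) /
          p (((na : ℝ) / ((na : ℝ) + (nb : ℝ))) * θa
            + ((nb : ℝ) / ((na : ℝ) + (nb : ℝ))) * θb) (y.1 i)) *
      (∏ i : Fin nb, p θb (y.2 i) /
          p (((na : ℝ) / ((na : ℝ) + (nb : ℝ))) * θa
            + ((nb : ℝ) / ((na : ℝ) + (nb : ℝ))) * θb) (y.2 i)))
    (θha θhb : (j : Fin m) → (Fin (j : ℕ) → (Fin na → Fin 2) × (Fin nb → Fin 2)) → ℝ)
    (hθha : ∀ j h, θha j h ∈ Set.Ioo (0 : ℝ) 1)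
    (hθhb : ∀ j h, θhb j h ∈ Set.Ioo (0 : ℝ) 1) :
    ∑ x : Fin m → (Fin na → Fin 2) × (Fin nb → Fin 2),
      (∏ j : Fin m, (∏ i : Fin na, p θ ((x j).1 i)) * ∏ i : Fin nb, p θ ((x j).2 i)) *
        ∏ j : Fin m,
          s (x j) (θha j fun i => x (Fin.castLE (le_of_lt j.isLt) i))
            (θhb j fun i => x (Fin.castLE (le_of_lt j.isLt) i)) ≤ 1 := by
  have hpb : p = bp := hp
  subst hpb
  subst hs
  refine pred_prod_le_one
    (fun y : (Fin na → Fin 2) × (Fin nb → Fin 2) =>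
      (∏ i, bp θ (y.1 i)) * ∏ i, bp θ (y.2 i))
    (fun y => mul_nonneg (Finset.prod_nonneg fun i _ => bp_nonneg hθ _)
      (Finset.prod_nonneg fun i _ => bp_nonneg hθ _))
    m
    (fun j h y =>
      (∏ i : Fin na, bp (θha j h) (y.1 i) /
          bp (((na : ℝ) / ((na : ℝ) + (nb : ℝ))) * θha j h
            + ((nb : ℝ) / ((na : ℝ) + (nb : ℝ))) * θhb j h) (y.1 i)) *
      (∏ i : Fin nb, bp (θhb j h) (y.2 i) /
          bp (((na : ℝ) / ((na : ℝ) + (nb : ℝ))) * θha j h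
            + ((nb : ℝ) / ((na : ℝ) + (nb : ℝ))) * θhb j h) (y.2 i)))
    (fun j h y => ?_) (fun j h => ?_)
  · have h0 := theta0_mem hna hnb (hθha j h) (hθhb j h)
    have hm0 : (((na : ℝ) / ((na : ℝ) + (nb : ℝ))) * θha j h
        + ((nb : ℝ) / ((na : ℝ) + (nb : ℝ))) * θhb j h) ∈ Set.Icc (0:ℝ) 1 :=
      ⟨h0.1.le, h0.2.le⟩
    exact mul_nonneg
      (Finset.prod_nonneg fun i _ => div_nonneg
        (bp_nonneg ⟨(hθha j h).1.le, (hθha j h).2.le⟩ _) (bp_nonneg hm0 _))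
      (Finset.prod_nonneg fun i _ => div_nonneg
        (bp_nonneg ⟨(hθhb j h).1.le, (hθhb j h).2.le⟩ _) (bp_nonneg hm0 _))
  · exact block_le_one hna hnb hθ (hθha j h) (hθhb j h)
end

section
/- Let n_a, n_b be positive integers, n = n_a + n_b, let θ*_a, θ*_b ∈ (0,1), and set θ_0 = (n_a/n)θ*_a + (n_b/n)θ*_b. Let Q be the distribution on {0,1}^n under which the first n_a coordinates are i.i.d. Bernoulli(θ*_a) and the last n_b coordinates are i.i.d. Bernoulli(θ*_b), independently. Define s(x) = ∏_{i=1}^{n_a} p_{θ*_a}(x_i)/p_{θ_0}(x_i) · ∏_{i=n_a+1}^{n} p_{θ*_b}(x_i)/p_{θ_0}(x_i), with p_η(y) = η^y(1−η)^{1−y}. Then for every nonnegative function s' on {0,1}^n satisfying E_{X ∼ Bernoulli(θ)^{⊗n}}[s'(X)] ≤ 1 for all θ ∈ [0,1], one has E_Q[log s'] ≤ E_Q[log s]. -/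
/-- The logarithm of a nonnegative real, valued in the extended reals (`log 0 = ⊥`). -/
noncomputable def elogR (x : ℝ) : EReal := if x ≤ 0 then ⊥ else ((Real.log x : ℝ) : EReal)

lemma ereal_coe_sum {α : Type*} (t : Finset α) (g : α → ℝ) :
    ((∑ x ∈ t, g x : ℝ) : EReal) = ∑ x ∈ t, ((g x : ℝ) : EReal) := by
  induction t using Finset.cons_induction with
  | empty => simp
  | cons a t ha ih => rw [Finset.sum_cons, Finset.sum_cons, ← ih]; exact EReal.coe_add _ _

/-- Theorem 1, part 2, instantiated to the Bernoulli model. With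
`θ*_a, θ*_b ∈ (0,1)`, `θ_0 = (n_a/n)θ*_a + (n_b/n)θ*_b`, `Q` the product distribution on
`{0,1}^n` with parameters `θ*_a` (first `n_a` coordinates) and `θ*_b` (last `n_b`), and `s`
the simple E-variable of equation (3.4), every nonnegative `s'` with expectation at most `1`
under every null `Bernoulli(θ)^{⊗n}` satisfies `E_Q[log s'] ≤ E_Q[log s]` (in the extended
reals). -/
theorem bernoulli_two_stream_GRO (na nb : ℕ) (hna : 0 < na) (hnb : 0 < nb)
    (θa θb : ℝ) (hθa : θa ∈ Set.Ioo (0 : ℝ) 1) (hθb : θb ∈ Set.Ioo (0 : ℝ) 1)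
    (p : ℝ → Fin 2 → ℝ)
    (hp : p = fun (η : ℝ) (y : Fin 2) => η ^ (y : ℕ) * (1 - η) ^ (1 - (y : ℕ)))
    (θ0 : ℝ)
    (hθ0 : θ0 = ((na : ℝ) / ((na : ℝ) + (nb : ℝ))) * θa
        + ((nb : ℝ) / ((na : ℝ) + (nb : ℝ))) * θb)
    (q : (Fin (na + nb) → Fin 2) → ℝ)
    (hq : q = fun x => ∏ i : Fin (na + nb),
      (if (i : ℕ) < na then p θa (x i) else p θb (x i)))
    (s : (Fin (na + nb) → Fin 2) → ℝ)
    (hs : s = fun x => ∏ i : Fin (na + nb),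
      (if (i : ℕ) < na then p θa (x i) / p θ0 (x i) else p θb (x i) / p θ0 (x i)))
    (s' : (Fin (na + nb) → Fin 2) → ℝ) (hs'nn : ∀ x, 0 ≤ s' x)
    (hs'E : ∀ θ ∈ Set.Icc (0 : ℝ) 1,
      ∑ x : Fin (na + nb) → Fin 2, (∏ i : Fin (na + nb), p θ (x i)) * s' x ≤ 1) :
    ∑ x : Fin (na + nb) → Fin 2, ((q x : ℝ) : EReal) * elogR (s' x) ≤
      ∑ x : Fin (na + nb) → Fin 2, ((q x : ℝ) : EReal) * elogR (s x) := by
  obtain ⟨hθa0, hθa1⟩ := hθa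
  obtain ⟨hθb0, hθb1⟩ := hθb
  have hnapos : (0:ℝ) < na := by exact_mod_cast hna
  have hnbpos : (0:ℝ) < nb := by exact_mod_cast hnb
  have hnpos : (0:ℝ) < (na:ℝ) + nb := by linarith
  -- θ0 ∈ (0,1)
  have hθ00 : 0 < θ0 := by
    rw [hθ0]; positivity
  have hθ01 : θ0 < 1 := by
    rw [hθ0]
    have h1 : (na:ℝ)/((na:ℝ)+nb) * θa < (na:ℝ)/((na:ℝ)+nb) * 1 := by
      apply mul_lt_mul_of_pos_left hθa1; positivity
    have h2 : (nb:ℝ)/((na:ℝ)+nb) * θb < (nb:ℝ)/((na:ℝ)+nb) * 1 := by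
      apply mul_lt_mul_of_pos_left hθb1; positivity
    have h3 : (na:ℝ)/((na:ℝ)+nb) * 1 + (nb:ℝ)/((na:ℝ)+nb) * 1 = 1 := by
      field_simp
    linarith
  -- positivity of p
  have hppos : ∀ η : ℝ, 0 < η → η < 1 → ∀ y : Fin 2, 0 < p η y := by
    intro η h0 h1 y
    fin_cases y <;> simp [hp] <;> linarith
  have hpa := hppos θa hθa0 hθa1
  have hpb := hppos θb hθb0 hθb1
  have hp0 := hppos θ0 hθ00 hθ01
  -- sum of p over Fin 2 is 1
  have hpsum : ∀ η : ℝ, ∑ y : Fin 2, p η y = 1 := by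
    intro η; rw [hp]; simp [Fin.sum_univ_two]
  -- q positive
  have hqpos : ∀ x, 0 < q x := by
    intro x; rw [hq]
    apply Finset.prod_pos
    intro i _; split_ifs
    · exact hpa _
    · exact hpb _
  -- s positive
  have hspos : ∀ x, 0 < s x := by
    intro x; rw [hs]
    apply Finset.prod_pos
    intro i _; split_ifs
    · exact div_pos (hpa _) (hp0 _)
    · exact div_pos (hpb _) (hp0 _)
  -- q = s * ∏ pθ0
  have hfact : ∀ x, q x = s x * ∏ i : Fin (na + nb), p θ0 (x i) := by
    intro x
    rw [hq, hs]
    simp only [← Finset.prod_mul_distrib]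
    apply Finset.prod_congr rfl
    intro i _
    split_ifs
    · rw [div_mul_cancel₀ _ (ne_of_gt (hp0 (x i)))]
    · rw [div_mul_cancel₀ _ (ne_of_gt (hp0 (x i)))]
  -- ∑ q = 1
  have hqsum : ∑ x : Fin (na + nb) → Fin 2, q x = 1 := by
    simp only [hq]
    have hps := Finset.prod_univ_sum (fun _ : Fin (na + nb) => (Finset.univ : Finset (Fin 2)))
      (fun i y => if (i : ℕ) < na then p θa y else p θb y)
    rw [Fintype.piFinset_univ] at hps
    have : (∑ x : Fin (na + nb) → Fin 2,
        ∏ i : Fin (na + nb), if (i : ℕ) < na then p θa (x i) else p θb (x i))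
        = ∏ i : Fin (na + nb), ∑ y : Fin 2, if (i : ℕ) < na then p θa y else p θb y :=
      hps.symm
    rw [this]
    apply Finset.prod_eq_one
    intro i _
    split_ifs
    · exact hpsum θa
    · exact hpsum θb
  -- main case split
  by_cases hz : ∀ x, 0 < s' x
  · -- all positive: real computation
    have hE : ∀ (f : (Fin (na + nb) → Fin 2) → ℝ), (∀ x, 0 < f x) →
        ∑ x : Fin (na + nb) → Fin 2, ((q x : ℝ) : EReal) * elogR (f x)
          = ((∑ x : Fin (na + nb) → Fin 2, q x * Real.log (f x) : ℝ) : EReal) := by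
      intro f hf
      rw [ereal_coe_sum]
      apply Finset.sum_congr rfl
      intro x _
      rw [elogR, if_neg (not_le.mpr (hf x)), EReal.coe_mul]
    rw [hE s' hz, hE s hspos, EReal.coe_le_coe_iff]
    -- real inequality
    have key : ∑ x : Fin (na + nb) → Fin 2, q x * (Real.log (s' x) - Real.log (s x)) ≤ 0 := by
      have step1 : ∀ x : Fin (na + nb) → Fin 2,
          q x * (Real.log (s' x) - Real.log (s x)) ≤ q x * (s' x / s x - 1) := by
        intro x
        apply mul_le_mul_of_nonneg_left _ (le_of_lt (hqpos x))
        rw [← Real.log_div (ne_of_gt (hz x)) (ne_of_gt (hspos x))]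
        exact Real.log_le_sub_one_of_pos (div_pos (hz x) (hspos x))
      calc ∑ x : Fin (na + nb) → Fin 2, q x * (Real.log (s' x) - Real.log (s x))
          ≤ ∑ x : Fin (na + nb) → Fin 2, q x * (s' x / s x - 1) :=
            Finset.sum_le_sum fun x _ => step1 x
        _ = ∑ x : Fin (na + nb) → Fin 2,
              ((∏ i : Fin (na + nb), p θ0 (x i)) * s' x - q x) := by
            apply Finset.sum_congr rfl
            intro x _
            have hsne := ne_of_gt (hspos x)
            rw [hfact x]
            field_simp
        _ = (∑ x : Fin (na + nb) → Fin 2, (∏ i : Fin (na + nb), p θ0 (x i)) * s' x)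
              - ∑ x : Fin (na + nb) → Fin 2, q x := Finset.sum_sub_distrib _ _
        _ ≤ 1 - 1 := by
            rw [hqsum]
            have := hs'E θ0 ⟨le_of_lt hθ00, le_of_lt hθ01⟩
            linarith
        _ = 0 := by ring
    have := Finset.sum_sub_distrib (s := (Finset.univ : Finset (Fin (na + nb) → Fin 2)))
      (f := fun x => q x * Real.log (s' x)) (g := fun x => q x * Real.log (s x))
    simp only [mul_sub] at key
    rw [this] at key
    linarith
  · -- some s' x = 0: LHS is ⊥
    push_neg at hz
    obtain ⟨x0, hx0⟩ := hz
    have hx0' : s' x0 ≤ 0 := le_of_not_gt (by intro h; exact absurd h (not_lt.mpr hx0))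
    have hterm : ((q x0 : ℝ) : EReal) * elogR (s' x0) = ⊥ := by
      rw [elogR, if_pos hx0']
      exact EReal.mul_bot_of_pos (by exact_mod_cast hqpos x0)
    have : ∑ x : Fin (na + nb) → Fin 2, ((q x : ℝ) : EReal) * elogR (s' x) = ⊥ := by
      rw [← Finset.add_sum_erase _ _ (Finset.mem_univ x0), hterm, EReal.bot_add]
    rw [this]
    exact bot_le
end
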